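/- Let g be a finite-dimensional Lie algebra over a field of characteristic zero equipped with a nondegenerate invariant symmetric bilinear form B, and let (e, h, f) be an sl2-triple in g. Then the bilinear form on the (−1)-eigenspace g(−1) of ad h defined by ⟨x, y⟩ = B(e, [x, y]) is skew-symmetric and nondegenerate. -/
import Mathlib

/- Auxiliary machinery: sl₂ string arguments showing that `ad h` has no Jordan blocks of
size ≥ 2 at eigenvalue `-1`, given an sl₂-triple `(h, e, f)` in characteristic zero. -/

open LieAlgebra LieModule

set_option linter.unusedSectionVars false
set_option linter.unusedVariables false
set_option maxHeartbeats 1000000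

namespace SkewFormAux

section Aux

variable {k g : Type*} [Field k] [CharZero k] [LieRing g] [LieAlgebra k g]
  [FiniteDimensional k g]
variable {e h f : g}
variable (hhe : ⁅h, e⁆ = (2 : k) • e) (hhf : ⁅h, f⁆ = (-2 : k) • f) (hef : ⁅e, f⁆ = h)

include hhe in
lemma adE_pow_inter (j : ℕ) (z : g) :
    ⁅h, ((ad k g e) ^ j) z⁆ = ((ad k g e) ^ j) ⁅h, z⁆ + ((2 * j : k)) • ((ad k g e) ^ j) z := by
  induction j generalizing z with
  | zero => simp
  | succ j ih =>
    have key : ⁅h, ⁅e, ((ad k g e) ^ j) z⁆⁆ =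
        ⁅e, ((ad k g e) ^ j) ⁅h, z⁆ + (2 * j : k) • ((ad k g e) ^ j) z⁆
          + (2 : k) • ⁅e, ((ad k g e) ^ j) z⁆ := by
      rw [leibniz_lie, hhe, smul_lie, ih]
      module
    rw [pow_succ']
    simp only [Module.End.mul_apply, ad_apply]
    rw [key, lie_add, lie_smul]
    push_cast
    module

include hhf in
lemma adF_pow_inter (j : ℕ) (z : g) :
    ⁅h, ((ad k g f) ^ j) z⁆ = ((ad k g f) ^ j) ⁅h, z⁆ - ((2 * j : k)) • ((ad k g f) ^ j) z := by
  induction j generalizing z with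
  | zero => simp
  | succ j ih =>
    have key : ⁅h, ⁅f, ((ad k g f) ^ j) z⁆⁆ =
        ⁅f, ((ad k g f) ^ j) ⁅h, z⁆ - (2 * j : k) • ((ad k g f) ^ j) z⁆
          - (2 : k) • ⁅f, ((ad k g f) ^ j) z⁆ := by
      rw [leibniz_lie, hhf, smul_lie, ih]
      module
    rw [pow_succ']
    simp only [Module.End.mul_apply, ad_apply]
    rw [key, lie_sub, lie_smul]
    push_cast
    module

include hhe in
lemma adE_pow_eigen {z : g} {μ : k} (hz : ⁅h, z⁆ = μ • z) (j : ℕ) :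
    ⁅h, ((ad k g e) ^ j) z⁆ = (μ + 2 * j) • ((ad k g e) ^ j) z := by
  rw [adE_pow_inter hhe, hz, map_smul, add_smul]

include hhf in
lemma adF_pow_eigen {z : g} {μ : k} (hz : ⁅h, z⁆ = μ • z) (j : ℕ) :
    ⁅h, ((ad k g f) ^ j) z⁆ = (μ - 2 * j) • ((ad k g f) ^ j) z := by
  rw [adF_pow_inter hhf, hz, map_smul, sub_smul]

lemma chain_terminates (A : Module.End k g) (c : k) (hc : c ≠ 0)
    (hstep : ∀ (z : g) (μ : k), ⁅h, z⁆ = μ • z → ⁅h, A z⁆ = (μ + c) • A z)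
    (z : g) (μ : k) (hz : ⁅h, z⁆ = μ • z) : ∃ j : ℕ, (A ^ j) z = 0 := by
  have eig : ∀ j : ℕ, ⁅h, (A ^ j) z⁆ = (μ + j * c) • (A ^ j) z := by
    intro j
    induction j with
    | zero => simpa using hz
    | succ j ih =>
      rw [pow_succ', Module.End.mul_apply, hstep _ _ ih]
      congr 1
      push_cast
      ring
  by_contra contra
  push_neg at contra
  have hinj : Function.Injective fun j : ℕ ↦ μ + j * c := by
    intro a b hab
    simp only at hab
    have hab' : (a : k) * c = b * c := by
      have := hab
      linear_combination this
    have : (a : k) = b := mul_right_cancel₀ hc hab'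
    exact_mod_cast this
  have hs : (Set.range fun j : ℕ ↦ μ + j * c).Infinite := by
    rw [Set.infinite_range_iff hinj]
    infer_instance
  have : {x : k | ∃ j : ℕ, μ + j * c = x}.Infinite := hs
  exact this ((ad k g h).eigenvectors_linearIndependent {μ + j * c | j : ℕ}
    (fun ⟨s, hs⟩ ↦ (A ^ (Classical.choose hs)) z)
    (fun ⟨r, hr⟩ ↦ by
      simpa [Module.End.hasEigenvector_iff, Module.End.mem_eigenspace_iff,
        Classical.choose_spec hr, contra] using eig (Classical.choose hr))).finite

include hhf in
lemma adF_pow_inter' (j : ℕ) (z : g) :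
    ⁅h, ((ad k g f) ^ j) z⁆ = ((ad k g f) ^ j) ⁅h, z⁆ - ((2 * j : k)) • ((ad k g f) ^ j) z := by
  induction j generalizing z with
  | zero => simp
  | succ j ih =>
    have key : ⁅h, ⁅f, ((ad k g f) ^ j) z⁆⁆ =
        ⁅f, ((ad k g f) ^ j) ⁅h, z⁆ - (2 * j : k) • ((ad k g f) ^ j) z⁆
          - (2 : k) • ⁅f, ((ad k g f) ^ j) z⁆ := by
      rw [leibniz_lie, hhf, smul_lie, ih]
      module
    rw [pow_succ']
    simp only [Module.End.mul_apply, ad_apply]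
    rw [key, lie_sub, lie_smul]
    push_cast
    module

include hhf in
lemma adF_pow_eigen' {z : g} {μ : k} (hz : ⁅h, z⁆ = μ • z) (j : ℕ) :
    ⁅h, ((ad k g f) ^ j) z⁆ = (μ - 2 * j) • ((ad k g f) ^ j) z := by
  rw [adF_pow_inter' hhf, hz, map_smul, sub_smul]

include hhf hef in
lemma EF_pow_eigen {z : g} {μ : k} (hz : ⁅h, z⁆ = μ • z) (m : ℕ) :
    ⁅e, ((ad k g f) ^ (m + 1)) z⁆ =
      ((ad k g f) ^ (m + 1)) ⁅e, z⁆ + (((m : k) + 1) * (μ - m)) • ((ad k g f) ^ m) z := by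
  induction m with
  | zero =>
    simp only [zero_add, pow_one, pow_zero, Module.End.one_apply, ad_apply, Nat.cast_zero]
    rw [leibniz_lie, hef, hz]
    module
  | succ m ih =>
    have hHF : ⁅h, ((ad k g f) ^ (m + 1)) z⁆ =
        (μ - 2 * (m + 1 : ℕ)) • ((ad k g f) ^ (m + 1)) z := adF_pow_eigen' hhf hz (m + 1)
    rw [pow_succ' (ad k g f) (m + 1)]
    simp only [Module.End.mul_apply, ad_apply]
    rw [leibniz_lie, hef, hHF, ih, lie_add, lie_smul]
    have hfm : ⁅f, ((ad k g f) ^ m) z⁆ = ((ad k g f) ^ (m + 1)) z := by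
      rw [pow_succ']; simp [Module.End.mul_apply]
    rw [hfm]
    push_cast
    module

include hhf hef in
lemma jordanH (w u' : g) {μ : k} (hw : ⁅h, w⁆ = μ • w + u') (hu : ⁅h, u'⁆ = μ • u')
    (m : ℕ) :
    ⁅h, ((ad k g f) ^ m) w⁆ = (μ - 2 * m) • ((ad k g f) ^ m) w + ((ad k g f) ^ m) u' := by
  rw [adF_pow_inter' hhf, hw, map_add, map_smul, sub_smul]
  module

include hhf hef in
lemma jordanEF (w u' : g) {μ : k} (hw : ⁅h, w⁆ = μ • w + u') (hu : ⁅h, u'⁆ = μ • u')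
    (hew : ⁅e, w⁆ = 0) (m : ℕ) :
    ⁅e, ((ad k g f) ^ (m + 1)) w⁆ =
      ((m : k) + 1) • ((μ - m) • ((ad k g f) ^ m) w + ((ad k g f) ^ m) u') := by
  induction m with
  | zero =>
    simp only [zero_add, pow_one, pow_zero, Module.End.one_apply, ad_apply, Nat.cast_zero]
    rw [leibniz_lie, hef, hw, hew, lie_zero]
    module
  | succ m ih =>
    have hHF := jordanH hhf hef w u' hw hu (m + 1)
    rw [pow_succ' (ad k g f) (m + 1)]
    simp only [Module.End.mul_apply, ad_apply]
    rw [leibniz_lie, hef, hHF, ih, lie_smul, lie_add, lie_smul]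
    have hfm : ⁅f, ((ad k g f) ^ m) w⁆ = ((ad k g f) ^ (m + 1)) w := by
      rw [pow_succ']; simp [Module.End.mul_apply]
    have hfm' : ⁅f, ((ad k g f) ^ m) u'⁆ = ((ad k g f) ^ (m + 1)) u' := by
      rw [pow_succ']; simp [Module.End.mul_apply]
    rw [hfm, hfm']
    push_cast
    module

include hhf in
lemma adF_step : ∀ (z : g) (μ : k), ⁅h, z⁆ = μ • z → ⁅h, (ad k g f) z⁆ = (μ + -2) • (ad k g f) z := by
  intro z μ hz
  simp only [ad_apply]
  rw [leibniz_lie, hhf, hz, smul_lie, lie_smul]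
  module

include hhe in
lemma adE_step : ∀ (z : g) (μ : k), ⁅h, z⁆ = μ • z → ⁅h, (ad k g e) z⁆ = (μ + 2) • (ad k g e) z := by
  intro z μ hz
  simp only [ad_apply]
  rw [leibniz_lie, hhe, hz, smul_lie, lie_smul]
  module

include hhf hef in
lemma no_jordan_witness (t : IsSl2Triple h e f) (n : ℕ) (u' w : g)
    (hu'ne : u' ≠ 0) (hu'h : ⁅h, u'⁆ = (n : k) • u') (hu'e : ⁅e, u'⁆ = 0)
    (hw : ⁅h, w⁆ = (n : k) • w + u') (hew : ⁅e, w⁆ = 0) : False := by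
  have P : t.HasPrimitiveVectorWith u' (n : k) := ⟨hu'ne, hu'h, hu'e⟩
  have hFzero : ((ad k g f) ^ (n + 1)) u' = 0 := P.pow_toEnd_f_eq_zero_of_eq_nat rfl
  have hFne : ∀ i, i ≤ n → ((ad k g f) ^ i) u' ≠ 0 := fun i hi =>
    P.pow_toEnd_f_ne_zero_of_eq_nat rfl hi
  have hw0 : w ≠ 0 := by
    rintro rfl
    rw [lie_zero, smul_zero, zero_add] at hw
    exact hu'ne hw.symm
  -- termination of the F-chain on w
  have hbig : ⁅h, ((ad k g f) ^ (n + 1)) w⁆ =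
      ((n : k) - 2 * (n + 1 : ℕ)) • ((ad k g f) ^ (n + 1)) w := by
    rw [jordanH hhf hef w u' hw hu'h (n + 1), hFzero, add_zero]
  obtain ⟨j, hj⟩ := chain_terminates (ad k g f) (-2) (by norm_num) (adF_step hhf) _ _ hbig
  have hex : ∃ m : ℕ, ((ad k g f) ^ m) w = 0 := by
    refine ⟨j + (n + 1), ?_⟩
    rw [pow_add, Module.End.mul_apply]
    exact hj
  have h0 : ¬ ((ad k g f) ^ 0) w = 0 := by simpa using hw0
  obtain ⟨m₀, hm₀ne, hm₀⟩ := Nat.exists_not_and_succ_of_not_zero_of_exists h0 hex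
  have hX : ((n : k) - m₀) • ((ad k g f) ^ m₀) w + ((ad k g f) ^ m₀) u' = 0 := by
    have := jordanEF hhf hef w u' hw hu'h hew m₀
    rw [hm₀, lie_zero] at this
    have hne : ((m₀ : k) + 1) ≠ 0 := Nat.cast_add_one_ne_zero m₀
    exact (smul_eq_zero.mp this.symm).resolve_left hne
  rcases lt_trichotomy m₀ n with hlt | heq | hgt
  · -- apply ad f to hX
    have := congrArg (ad k g f) hX
    rw [map_add, map_smul, map_zero] at this
    have hfw : (ad k g f) (((ad k g f) ^ m₀) w) = ((ad k g f) ^ (m₀ + 1)) w := by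
      rw [pow_succ', Module.End.mul_apply]
    have hfu : (ad k g f) (((ad k g f) ^ m₀) u') = ((ad k g f) ^ (m₀ + 1)) u' := by
      rw [pow_succ', Module.End.mul_apply]
    rw [hfw, hfu, hm₀, smul_zero, zero_add] at this
    exact hFne (m₀ + 1) (by omega) this
  · subst heq
    rw [sub_self, zero_smul, zero_add] at hX
    exact hFne m₀ le_rfl hX
  · have hu0 : ((ad k g f) ^ m₀) u' = 0 := by
      have : m₀ = (m₀ - (n + 1)) + (n + 1) := by omega
      rw [this, pow_add, Module.End.mul_apply, hFzero, map_zero]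
    rw [hu0, add_zero, smul_eq_zero] at hX
    rcases hX with hX | hX
    · have : (n : k) ≠ (m₀ : k) := by
        intro hh
        exact (by omega : n ≠ m₀) (by exact_mod_cast hh)
      exact this (sub_eq_zero.mp hX)
    · exact hm₀ne hX

include hhe hhf hef in
lemma correction (n : ℕ) (s : g) (hs : ⁅h, s⁆ = ((n : k) + 2) • s) (K : ℕ)
    (hK : ((ad k g e) ^ K) s = 0) : ∃ c : g, ⁅h, c⁆ = (n : k) • c ∧ ⁅e, c⁆ = s := by
  classical
  let b : ℕ → k := fun j => Nat.rec (-1) (fun j bj => -bj / (((j : k) + 1) * ((n : k) + j + 2))) j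
  have hD : ∀ j : ℕ, (((j : k) + 1) * ((n : k) + j + 2)) ≠ 0 := by
    intro j
    have h1 : ((j : k) + 1) ≠ 0 := Nat.cast_add_one_ne_zero j
    have h2 : ((n : k) + j + 2) ≠ 0 := by
      have h3 : ((n + j + 1 : ℕ) : k) + 1 ≠ 0 := Nat.cast_add_one_ne_zero _
      intro hc
      apply h3
      push_cast
      linear_combination hc
    exact mul_ne_zero h1 h2
  have hb : ∀ j : ℕ, b (j + 1) * (((j : k) + 1) * ((n : k) + j + 2)) = - b j := by
    intro j
    show (-b j / _) * _ = _
    rw [div_mul_cancel₀ _ (hD j)]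
  set sj : ℕ → g := fun j => ((ad k g e) ^ j) s with hsj_def
  have hsj : ∀ j : ℕ, ⁅h, sj j⁆ = ((n : k) + 2 + 2 * j) • sj j := fun j =>
    adE_pow_eigen hhe hs j
  have hsjsucc : ∀ j : ℕ, ⁅e, sj j⁆ = sj (j + 1) := by
    intro j
    show ⁅e, _⁆ = ((ad k g e) ^ (j + 1)) s
    rw [pow_succ', Module.End.mul_apply, ad_apply]
  set G : ℕ → g := fun j => b j • ((ad k g f) ^ j) (sj j) with hG_def
  have hterm : ∀ j : ℕ, ⁅e, b (j + 1) • ((ad k g f) ^ (j + 1)) (sj j)⁆ = G (j + 1) - G j := by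
    intro j
    rw [lie_smul, EF_pow_eigen hhf hef (hsj j) j, hsjsucc j]
    have hcoef : ((j : k) + 1) * (((n : k) + 2 + 2 * j) - j) = ((j : k) + 1) * ((n : k) + j + 2) := by
      ring
    rw [smul_add, smul_smul, hcoef, hb j, hG_def]
    simp only [neg_smul]
    abel
  have hlie_sum : ∀ (x : g) (F : ℕ → g) (S : Finset ℕ), ⁅x, ∑ j ∈ S, F j⁆ = ∑ j ∈ S, ⁅x, F j⁆ := by
    intro x F S
    rw [← ad_apply (R := k), map_sum]
    simp [ad_apply]
  refine ⟨∑ j ∈ Finset.range K, b (j + 1) • ((ad k g f) ^ (j + 1)) (sj j), ?_, ?_⟩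
  · rw [hlie_sum, Finset.smul_sum]
    refine Finset.sum_congr rfl fun j _ => ?_
    rw [lie_smul, adF_pow_eigen' hhf (hsj j) (j + 1), smul_smul, smul_smul]
    congr 1
    push_cast
    ring
  · rw [hlie_sum]
    have : ∀ j ∈ Finset.range K, ⁅e, b (j + 1) • ((ad k g f) ^ (j + 1)) (sj j)⁆
        = G (j + 1) - G j := fun j _ => hterm j
    rw [Finset.sum_congr rfl this, Finset.sum_range_sub G]
    have hGK : G K = 0 := by
      rw [hG_def]
      show b K • ((ad k g f) ^ K) (sj K) = 0
      rw [show sj K = 0 from hK, map_zero, smul_zero]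
    have hG0 : G 0 = (-1 : k) • s := by
      rw [hG_def]
      show b 0 • ((ad k g f) ^ 0) (sj 0) = (-1 : k) • s
      simp [b, hsj_def]
    rw [hGK, hG0]
    module

include hhe hhf hef in
lemma key_no_jordan (t : IsSl2Triple h e f) (v : g)
    (hv : ⁅h, ⁅h, v⁆ + v⁆ = -(⁅h, v⁆ + v)) : ⁅h, v⁆ = -v := by
  by_contra hcon
  set u : g := ⁅h, v⁆ + v with hu_def
  have hu_ne : u ≠ 0 := by
    intro h0
    apply hcon
    have : ⁅h, v⁆ + v = 0 := h0
    linear_combination (norm := module) this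
  have hu : ⁅h, u⁆ = (-1 : k) • u := by rw [hv]; module
  have h0 : ¬ ((ad k g e) ^ 0) u = 0 := by simpa using hu_ne
  obtain ⟨N, hNne, hN⟩ := Nat.exists_not_and_succ_of_not_zero_of_exists h0
    (chain_terminates (ad k g e) 2 two_ne_zero (adE_step hhe) u (-1) hu)
  set u' : g := ((ad k g e) ^ N) u with hu'_def
  have hu'h : ⁅h, u'⁆ = ((-1 : k) + 2 * N) • u' := adE_pow_eigen hhe hu N
  have hu'e : ⁅e, u'⁆ = 0 := by
    show ⁅e, ((ad k g e) ^ N) u⁆ = 0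
    rw [← ad_apply (R := k), ← Module.End.mul_apply, ← pow_succ']
    exact hN
  have P : t.HasPrimitiveVectorWith u' ((-1 : k) + 2 * N) := ⟨hNne, hu'h, hu'e⟩
  obtain ⟨n, hn⟩ := P.exists_nat
  have hu'h' : ⁅h, u'⁆ = (n : k) • u' := by rw [hu'h, hn]
  set w₀ : g := ((ad k g e) ^ N) v with hw₀_def
  have hw₀ : ⁅h, w₀⁆ = (n : k) • w₀ + u' := by
    show ⁅h, ((ad k g e) ^ N) v⁆ = (n : k) • ((ad k g e) ^ N) v + ((ad k g e) ^ N) u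
    rw [adE_pow_inter hhe N v, show ⁅h, v⁆ = u - v from by rw [hu_def]; abel, map_sub, ← hn]
    module
  set s : g := ⁅e, w₀⁆ with hs_def
  have hs : ⁅h, s⁆ = ((n : k) + 2) • s := by
    rw [hs_def, leibniz_lie, hhe, hw₀, smul_lie, lie_add, lie_smul, hu'e, add_zero]
    module
  obtain ⟨K, hK⟩ := chain_terminates (ad k g e) 2 two_ne_zero (adE_step hhe) s ((n : k) + 2) hs
  obtain ⟨c, hch, hce⟩ := correction hhe hhf hef n s hs K hK
  refine no_jordan_witness hhf hef t n u' (w₀ - c) hNne hu'h' hu'e ?_ ?_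
  · rw [lie_sub, hw₀, hch]
    module
  · rw [lie_sub, hce, ← hs_def, sub_self]

end Aux

end SkewFormAux

open SkewFormAux in
/-- Let `g` be a finite-dimensional Lie algebra over a field of characteristic zero with a
nondegenerate invariant symmetric bilinear form `B`, and let `(e, h, f)` be an
`sl₂`-triple. Then the bilinear form `⟨x, y⟩ = B(e, [x, y])` on the `(−1)`-eigenspace of
`ad h` is skew-symmetric and nondegenerate. -/
theorem skew_form_on_minus_one_eigenspace
    (k g : Type*) [Field k] [CharZero k] [LieRing g] [LieAlgebra k g]
    [FiniteDimensional k g]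
    (B : g →ₗ[k] g →ₗ[k] k)
    (hsymm : ∀ x y : g, B x y = B y x)
    (hinv : ∀ x y z : g, B ⁅x, y⁆ z = B x ⁅y, z⁆)
    (hnondeg : ∀ x : g, (∀ y : g, B x y = 0) → x = 0)
    (e h f : g)
    (hhe : ⁅h, e⁆ = (2 : k) • e) (hhf : ⁅h, f⁆ = (-2 : k) • f)
    (hef : ⁅e, f⁆ = h) (hne : e ≠ 0) :
    (∀ x y : Module.End.eigenspace ((LieAlgebra.ad k g) h) (-1 : k),
        B e ⁅(x : g), (y : g)⁆ = - B e ⁅(y : g), (x : g)⁆) ∧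
      (∀ x : Module.End.eigenspace ((LieAlgebra.ad k g) h) (-1 : k),
        (∀ y : Module.End.eigenspace ((LieAlgebra.ad k g) h) (-1 : k),
          B e ⁅(x : g), (y : g)⁆ = 0) → x = 0) := by
  have t : IsSl2Triple h e f := by
    refine ⟨?_, hef, ?_, ?_⟩
    · rintro rfl
      rw [zero_lie] at hhe
      refine hne ?_
      have := hhe.symm
      rw [smul_eq_zero] at this
      simpa using this
    · rw [hhe, two_smul, two_smul]
    · rw [hhf, two_smul]
      module
  constructor
  · intro x y
    rw [show ⁅(x : g), (y : g)⁆ = -⁅(y : g), (x : g)⁆ from (lie_skew _ _).symm, map_neg]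
  · intro x hx
    -- x is an eigenvector
    have hxh : ⁅h, (x : g)⁆ = (-1 : k) • (x : g) := by
      have := Module.End.mem_eigenspace_iff.mp x.2
      rwa [ad_apply] at this
    set u : g := ⁅e, (x : g)⁆ with hu_def
    have hu_h : ⁅h, u⁆ = u := by
      rw [hu_def, leibniz_lie, hhe, hxh, smul_lie, lie_smul]
      module
    -- the endomorphism ad h + 1
    set A₂ : Module.End k g := ad k g h + LinearMap.id with hA₂_def
    have hA₂app : ∀ z : g, A₂ z = ⁅h, z⁆ + z := by
      intro z; simp [hA₂_def, ad_apply]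
    have hdisj : LinearMap.ker A₂ ⊓ LinearMap.range A₂ = ⊥ := by
      rw [eq_bot_iff]
      rintro z ⟨hzk, hzr⟩
      obtain ⟨y, rfl⟩ := hzr
      have hker : ⁅h, ⁅h, y⁆ + y⁆ + (⁅h, y⁆ + y) = 0 := by
        have := LinearMap.mem_ker.mp hzk
        rw [hA₂app, hA₂app] at this
        exact this
      have := key_no_jordan hhe hhf hef t y (by linear_combination (norm := module) hker)
      simp only [Submodule.mem_bot, hA₂app]
      rw [this]
      abel
    have hsup : LinearMap.ker A₂ ⊔ LinearMap.range A₂ = ⊤ := by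
      apply Submodule.eq_top_of_finrank_eq
      have h1 := Submodule.finrank_sup_add_finrank_inf_eq (LinearMap.ker A₂) (LinearMap.range A₂)
      rw [hdisj] at h1
      simp only [finrank_bot, add_zero] at h1
      have h2 := LinearMap.finrank_range_add_finrank_ker A₂
      omega
    have hBu : ∀ z : g, B u z = 0 := by
      intro z
      have hz : z ∈ LinearMap.ker A₂ ⊔ LinearMap.range A₂ := by
        rw [hsup]; trivial
      obtain ⟨z₁, hz₁, z₂, hz₂, rfl⟩ := Submodule.mem_sup.mp hz
      rw [map_add]
      have e₁ : B u z₁ = 0 := by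
        have hzz : ⁅h, z₁⁆ = -z₁ := by
          have := LinearMap.mem_ker.mp hz₁
          rw [hA₂app] at this
          linear_combination (norm := module) this
        have m₁ : z₁ ∈ Module.End.eigenspace (ad k g h) (-1 : k) := by
          rw [Module.End.mem_eigenspace_iff, ad_apply, hzz]
          module
        have := hx ⟨z₁, m₁⟩
        rw [hu_def, hinv]
        exact this
      have e₂ : B u z₂ = 0 := by
        obtain ⟨y, rfl⟩ := hz₂
        rw [hA₂app, map_add]
        have huh : B u ⁅h, y⁆ = - B u y := by
          rw [← hinv u h y, show ⁅u, h⁆ = -u from by rw [← lie_skew, hu_h], map_neg,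
            LinearMap.neg_apply]
        rw [huh]
        ring
      rw [e₁, e₂, add_zero]
    have hu0 : ⁅e, (x : g)⁆ = 0 := hnondeg u hBu
    -- now x must vanish
    by_contra hxne
    have hxne' : (x : g) ≠ 0 := fun hcc => hxne (Subtype.ext hcc)
    have P : t.HasPrimitiveVectorWith (x : g) (-1 : k) := ⟨hxne', hxh, hu0⟩
    obtain ⟨n, hn⟩ := P.exists_nat
    have : ((n : k) + 1) = 0 := by rw [← hn]; ring
    exact Nat.cast_add_one_ne_zero n this
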